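/- Let A be a real n×n matrix, let λ ≥ 0 and ε > 0, let 0 ≤ p ≤ n−1, and let P be a real symmetric n×n matrix with inertia p such that AᵀP + PA ⪯ −2λP − εI. Let μ_max(P) > 0 denote the largest eigenvalue of P and set ε₂ = ε/μ_max(P). Then for every t ≥ 0 and every x ∈ ℝⁿ with xᵀPx ≥ 0, one has (exp(−At)x)ᵀP(exp(−At)x) ≥ e^((2λ + ε₂)t) · xᵀPx. -/

import Mathlib

open Matrix

/-- `M ⪯ N` iff `N - M` is positive semidefinite. -/
def matLE {m : Type*} [Fintype m] (M N : Matrix m m ℝ) : Prop := (N - M).PosSemidef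

/-- A real symmetric matrix has inertia `p`: exactly `p` negative eigenvalues,
`card m − p` positive eigenvalues, and no zero eigenvalues, counted with multiplicity
(as roots of the characteristic polynomial). -/
def hasInertia {m : Type*} [Fintype m] [DecidableEq m]
    (P : Matrix m m ℝ) (p : ℕ) : Prop :=
  Multiset.countP (fun μ : ℝ => μ < 0) P.charpoly.roots = p ∧
  Multiset.countP (fun μ : ℝ => 0 < μ) P.charpoly.roots = Fintype.card m - p ∧
  (0 : ℝ) ∉ P.charpoly.roots

/-- Number of complex eigenvalues (with algebraic multiplicity) of a real matrix
with strictly positive real part. -/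
noncomputable def posReCount {m : Type*} [Fintype m] [DecidableEq m]
    (A : Matrix m m ℝ) : ℕ :=
  Multiset.countP (fun μ : ℂ => 0 < μ.re) (A.map Complex.ofReal).charpoly.roots

/-- Number of complex eigenvalues (with algebraic multiplicity) of a real matrix
with strictly negative real part. -/
noncomputable def negReCount {m : Type*} [Fintype m] [DecidableEq m]
    (A : Matrix m m ℝ) : ℕ :=
  Multiset.countP (fun μ : ℂ => μ.re < 0) (A.map Complex.ofReal).charpoly.roots

/-- The quadratic form `xᵀ P x`. -/
def quadForm {m : Type*} [Fintype m] (P : Matrix m m ℝ) (x : m → ℝ) : ℝ :=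
  x ⬝ᵥ P.mulVec x

/-- Euclidean norm on `m → ℝ`. -/
noncomputable def enorm {m : Type*} [Fintype m] (x : m → ℝ) : ℝ :=
  Real.sqrt (x ⬝ᵥ x)

/-- `J` is the Jacobian of `f`. -/
def IsJacobianOf {n : ℕ} (J : (Fin n → ℝ) → Matrix (Fin n) (Fin n) ℝ)
    (f : (Fin n → ℝ) → (Fin n → ℝ)) : Prop :=
  ∀ x, HasFDerivAt f (LinearMap.toContinuousLinearMap ((J x).mulVecLin)) x

/- ## Auxiliary material -/

attribute [local instance] Matrix.linftyOpNormedAddCommGroup Matrix.linftyOpNormedRing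
  Matrix.linftyOpNormedAlgebra

private lemma eval_charpoly' {n : ℕ} (M : Matrix (Fin n) (Fin n) ℝ) (μ : ℝ) :
    M.charpoly.eval μ = (Matrix.scalar (Fin n) μ - M).det := by
  rw [Matrix.charpoly, eval_det, matPolyEquiv_charmatrix]
  simp

private lemma eig_root {n : ℕ} {P : Matrix (Fin n) (Fin n) ℝ} (hH : P.IsHermitian) (i : Fin n) :
    hH.eigenvalues i ∈ P.charpoly.roots := by
  have hmem := hH.eigenvalues_mem_spectrum_real i
  rw [spectrum.mem_iff] at hmem
  rw [Polynomial.mem_roots (P.charpoly_monic.ne_zero)]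
  have hdet : (Matrix.scalar (Fin n) (hH.eigenvalues i) - P).det = 0 := by
    by_contra h
    exact hmem ((Matrix.isUnit_iff_isUnit_det _).mpr (isUnit_iff_ne_zero.mpr h))
  rw [Polynomial.IsRoot, eval_charpoly', hdet]

private lemma quad_le_mu {n : ℕ} {P : Matrix (Fin n) (Fin n) ℝ} (hH : P.IsHermitian) {μmax : ℝ}
    (hub : ∀ μ ∈ P.charpoly.roots, μ ≤ μmax) (v : Fin n → ℝ) :
    v ⬝ᵥ (P *ᵥ v) ≤ μmax * (v ⬝ᵥ v) := by
  set U : Matrix (Fin n) (Fin n) ℝ := (hH.eigenvectorUnitary : Matrix (Fin n) (Fin n) ℝ) with hUdef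
  have hUU : U * star U = 1 := (Matrix.mem_unitaryGroup_iff).mp hH.eigenvectorUnitary.2
  have hdiag : (Matrix.diagonal (fun i => μmax - hH.eigenvalues i)).PosSemidef :=
    Matrix.posSemidef_diagonal_iff.mpr fun i => sub_nonneg.mpr (hub _ (eig_root hH i))
  have hQ : (μmax • (1 : Matrix (Fin n) (Fin n) ℝ) - P).PosSemidef := by
    have key : μmax • (1 : Matrix (Fin n) (Fin n) ℝ) - P
        = U * Matrix.diagonal (fun i => μmax - hH.eigenvalues i) * Uᴴ := by
      have hD : Matrix.diagonal (fun i => μmax - hH.eigenvalues i)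
          = μmax • (1 : Matrix (Fin n) (Fin n) ℝ)
            - Matrix.diagonal (RCLike.ofReal ∘ hH.eigenvalues) := by
        ext i j
        by_cases h : i = j <;>
          simp [h, Matrix.diagonal_apply, Matrix.one_apply, Matrix.smul_apply, RCLike.ofReal]
      have hUU' : U * Uᴴ = 1 := hUU
      have hsp : P = U * Matrix.diagonal (RCLike.ofReal ∘ hH.eigenvalues) * Uᴴ :=
        hH.spectral_theorem
      rw [hD, Matrix.mul_sub, Matrix.sub_mul, mul_smul_comm, smul_mul_assoc, mul_one, hUU',
        ← hsp]
    rw [key]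
    exact hdiag.mul_mul_conjTranspose_same U
  have h2 := hQ.dotProduct_mulVec_nonneg v
  simp only [star_trivial, Matrix.sub_mulVec, Matrix.smul_mulVec, Matrix.one_mulVec,
    dotProduct_sub, dotProduct_smul, smul_eq_mul] at h2
  linarith

/-- mulVec (applied to a fixed vector) as a continuous linear map in the matrix. -/
private noncomputable def mulVecCLM {n : ℕ} (x : Fin n → ℝ) :
    Matrix (Fin n) (Fin n) ℝ →L[ℝ] (Fin n → ℝ) :=
  LinearMap.toContinuousLinearMap
    { toFun := fun M => M *ᵥ x
      map_add' := fun M N => Matrix.add_mulVec M N x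
      map_smul' := fun c M => Matrix.smul_mulVec c M x }

private lemma hasDerivAt_quadForm {n : ℕ} (P : Matrix (Fin n) (Fin n) ℝ)
    {y : ℝ → (Fin n → ℝ)} {y' : Fin n → ℝ} {t : ℝ} (h : HasDerivAt y y' t) :
    HasDerivAt (fun s => quadForm P (y s))
      (y' ⬝ᵥ (P *ᵥ y t) + (y t) ⬝ᵥ (P *ᵥ y')) t := by
  have h1 : ∀ i, HasDerivAt (fun s => y s i) (y' i) t := fun i =>
    (ContinuousLinearMap.proj (R := ℝ) (φ := fun _ : Fin n => ℝ) i).hasFDerivAt.comp_hasDerivAt t h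
  have main : HasDerivAt (fun s => ∑ i, y s i * ∑ j, P i j * y s j)
      (∑ i, (y' i * ∑ j, P i j * y t j + y t i * ∑ j, P i j * y' j)) t := by
    refine HasDerivAt.fun_sum fun i _ => ?_
    exact (h1 i).mul (HasDerivAt.fun_sum fun j _ => (h1 j).const_mul (P i j))
  have e1 : (fun s => quadForm P (y s)) = fun s => ∑ i, y s i * ∑ j, P i j * y s j := by
    funext s; simp [quadForm, dotProduct, Matrix.mulVec]
  have e2 : y' ⬝ᵥ (P *ᵥ y t) + (y t) ⬝ᵥ (P *ᵥ y')
      = ∑ i, (y' i * ∑ j, P i j * y t j + y t i * ∑ j, P i j * y' j) := by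
    simp [dotProduct, Matrix.mulVec, Finset.sum_add_distrib]
  rw [e1, e2]; exact main

private lemma deriv_identity {n : ℕ} (A P : Matrix (Fin n) (Fin n) ℝ) (y : Fin n → ℝ) :
    (-(A *ᵥ y)) ⬝ᵥ (P *ᵥ y) + y ⬝ᵥ (P *ᵥ (-(A *ᵥ y)))
      = -(y ⬝ᵥ ((Aᵀ * P + P * A) *ᵥ y)) := by
  have key : ∀ z : Fin n → ℝ, (A *ᵥ y) ⬝ᵥ z = y ⬝ᵥ (Aᵀ *ᵥ z) := by
    intro z
    rw [Matrix.dotProduct_mulVec, Matrix.vecMul_transpose]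
  rw [Matrix.add_mulVec, dotProduct_add, ← Matrix.mulVec_mulVec, ← Matrix.mulVec_mulVec,
    neg_dotProduct, Matrix.mulVec_neg, dotProduct_neg, key]
  ring

/-- exponential growth estimate of the quadratic form inside K⁺
under the backward flow. -/
theorem exponential_estimate_in_Kplus {n : ℕ}
    (A P : Matrix (Fin n) (Fin n) ℝ) (p : ℕ) (lam eps μmax : ℝ)
    (hlam : 0 ≤ lam) (heps : 0 < eps) (hpn : p ≤ n - 1)
    (hPsymm : P.IsSymm) (hPinertia : hasInertia P p)
    (hμmax : IsGreatest {μ : ℝ | μ ∈ P.charpoly.roots} μmax) (hμmaxpos : 0 < μmax)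
    (hLMI : matLE (Aᵀ * P + P * A)
      (-((2 * lam) • P) - eps • (1 : Matrix (Fin n) (Fin n) ℝ))) :
    ∀ t : ℝ, 0 ≤ t → ∀ x : Fin n → ℝ, 0 ≤ quadForm P x →
      Real.exp ((2 * lam + eps / μmax) * t) * quadForm P x
        ≤ quadForm P ((NormedSpace.exp (-(t • A))).mulVec x) := by
  intro t ht x _hx
  have hH : P.IsHermitian := by
    rw [Matrix.IsHermitian, Matrix.conjTranspose]
    exact Matrix.isHermitian_iff_isSymm.mpr hPsymm
  have hub : ∀ μ ∈ P.charpoly.roots, μ ≤ μmax := fun μ hμ => hμmax.2 hμ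
  set c : ℝ := 2 * lam + eps / μmax with hc
  set y : ℝ → (Fin n → ℝ) := fun s => (NormedSpace.exp (s • (-A))) *ᵥ x with hy_def
  set V : ℝ → ℝ := fun s => quadForm P (y s) with hV_def
  set D : ℝ → ℝ := fun s => -(y s ⬝ᵥ ((Aᵀ * P + P * A) *ᵥ y s)) with hD_def
  -- derivative of the flow
  have hy : ∀ s, HasDerivAt y (-(A *ᵥ y s)) s := by
    intro s
    have h := hasDerivAt_exp_smul_const' (𝕂 := ℝ) (-A) s
    have hcomm : Commute (-A) (NormedSpace.exp (s • (-A))) :=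
      ((Commute.refl (-A)).smul_right s).exp_right
    have h2 := (mulVecCLM x).hasFDerivAt.comp_hasDerivAt s h
    have e : (mulVecCLM x) ((-A) * NormedSpace.exp (s • (-A))) = -(A *ᵥ y s) := by
      show ((-A) * NormedSpace.exp (s • (-A))) *ᵥ x = _
      rw [← Matrix.mulVec_mulVec, Matrix.neg_mulVec]
    exact h2.congr_deriv e
  -- derivative of V
  have hV : ∀ s, HasDerivAt V (D s) s := by
    intro s
    have h := hasDerivAt_quadForm P (hy s)
    rw [deriv_identity] at h
    exact h
  -- differential inequality
  have hineq : ∀ s, c * V s ≤ D s := by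
    intro s
    have hps : ((-((2 * lam) • P) - eps • (1 : Matrix (Fin n) (Fin n) ℝ))
        - (Aᵀ * P + P * A)).PosSemidef := hLMI
    have hl := hps.dotProduct_mulVec_nonneg (y s)
    simp only [star_trivial, Matrix.sub_mulVec, Matrix.neg_mulVec, Matrix.smul_mulVec,
      Matrix.one_mulVec, dotProduct_sub, dotProduct_neg, dotProduct_smul,
      smul_eq_mul] at hl
    have hq := quad_le_mu hH hub (y s)
    have hdivpos : 0 ≤ eps / μmax := le_of_lt (div_pos heps hμmaxpos)
    have hmul := mul_le_mul_of_nonneg_left hq hdivpos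
    rw [← mul_assoc, div_mul_cancel₀ _ (ne_of_gt hμmaxpos)] at hmul
    have hVeq : V s = y s ⬝ᵥ (P *ᵥ y s) := rfl
    rw [hD_def, hc]
    simp only [hVeq]
    nlinarith [hl, hmul]
  -- Gronwall
  set g : ℝ → ℝ := fun s => Real.exp (-(c * s)) * V s with hg_def
  have hg : ∀ s, HasDerivAt g (Real.exp (-(c * s)) * (D s - c * V s)) s := by
    intro s
    have hu : HasDerivAt (fun s : ℝ => -(c * s)) (-c) s := by
      exact (((hasDerivAt_id s).const_mul c).neg).congr_deriv (by ring)
    have hexp : HasDerivAt (fun s : ℝ => Real.exp (-(c * s)))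
        (Real.exp (-(c * s)) * (-c)) s := (Real.hasDerivAt_exp _).comp s hu
    have h := hexp.mul (hV s)
    exact h.congr_deriv (by ring)
  have hmono : Monotone g :=
    monotone_of_deriv_nonneg (fun s => (hg s).differentiableAt) (fun s => by
      rw [(hg s).deriv]
      have := hineq s
      have := Real.exp_nonneg (-(c * s))
      nlinarith)
  have h0t := hmono ht
  have hy0 : y 0 = x := by
    simp [hy_def]
  have hg0 : g 0 = quadForm P x := by
    simp [hg_def, hV_def, hy0]
  have hgt : g t = Real.exp (-(c * t)) * V t := rfl
  rw [hg0, hgt] at h0t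
  have hVt : quadForm P ((NormedSpace.exp (-(t • A))).mulVec x) = V t := by
    rw [hV_def]
    simp only [hy_def]
    congr 2
    rw [smul_neg]
  rw [hVt]
  have hexp_pos : 0 < Real.exp (c * t) := Real.exp_pos _
  have : Real.exp (c * t) * quadForm P x ≤ Real.exp (c * t) * (Real.exp (-(c * t)) * V t) :=
    mul_le_mul_of_nonneg_left h0t (le_of_lt hexp_pos)
  rwa [← mul_assoc, ← Real.exp_add, add_neg_cancel, Real.exp_zero, one_mul] at this
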